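/- Suppose four families of nonnegative reals a_{n,p}, b_{n,p}, γ_{k,n,p} (indexed by integers n ≥ 0, reals p ∈ (0,1), and 0 ≤ k ≤ n-1) satisfy a_{n,p} ≤ b_{n,p} + Σ_{k=0}^{n-1} γ_{k,n,p} a_{k,p}, and let F be a filter on ℕ×(0,1). Assume: (a) the a_{n,p} are bounded; (b) there exist Γ < 1 and V_0 ∈ F with Σ_{k=0}^{n-1} γ_{k,n,p} < Γ for all (n,p) ∈ V_0; (c) b_{n,p} → 0 along F; (d) for every V ∈ F, Σ_{k : (k,p)∉V} γ_{k,n,p} → 0 along F. Then a_{n,p} → 0 along F. -/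
import Mathlib

open Filter Classical

/-- Rösler-type convergence lemma along a filter. If
`a_{n,p} ≤ b_{n,p} + Σ_{k=0}^{n-1} γ_{k,n,p} a_{k,p}` for nonnegative families, the
`a_{n,p}` are bounded, eventually `Σ_k γ_{k,n,p} < Γ < 1`, `b_{n,p} → 0` along a filter
`F`, and for every `V ∈ F` the sum `Σ_{k : (k,p)∉V} γ_{k,n,p} → 0` along `F`, then
`a_{n,p} → 0` along `F`. -/
theorem roesler_filter_lemma
    (a b : ℕ → Set.Ioo (0:ℝ) 1 → ℝ) (γ : ℕ → ℕ → Set.Ioo (0:ℝ) 1 → ℝ)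
    (F : Filter (ℕ × Set.Ioo (0:ℝ) 1))
    (ha_nonneg : ∀ n p, 0 ≤ a n p) (hb_nonneg : ∀ n p, 0 ≤ b n p)
    (hγ_nonneg : ∀ k n p, 0 ≤ γ k n p)
    (hrec : ∀ n p, a n p ≤ b n p + ∑ k ∈ Finset.range n, γ k n p * a k p)
    (hbdd : ∃ M : ℝ, ∀ n p, a n p ≤ M)
    (hΓ : ∃ Γ : ℝ, Γ < 1 ∧ ∃ V₀ ∈ F, ∀ q ∈ V₀, ∑ k ∈ Finset.range q.1, γ k q.1 q.2 < Γ)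
    (hb : Tendsto (fun q : ℕ × Set.Ioo (0:ℝ) 1 => b q.1 q.2) F (nhds 0))
    (hγ : ∀ V ∈ F, Tendsto (fun q : ℕ × Set.Ioo (0:ℝ) 1 =>
        ∑ k ∈ (Finset.range q.1).filter (fun k => (k, q.2) ∉ V), γ k q.1 q.2)
      F (nhds 0)) :
    Tendsto (fun q : ℕ × Set.Ioo (0:ℝ) 1 => a q.1 q.2) F (nhds 0) := by
  rcases hbdd with ⟨M₀, hM₀⟩
  set M := max M₀ 0 with hMdef
  have hM : ∀ n p, a n p ≤ M := fun n p => (hM₀ n p).trans (le_max_left _ _)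
  have hM0 : (0:ℝ) ≤ M := le_max_right _ _
  obtain ⟨Γ₀, hΓ₀1, V₀, hV₀F, hV₀⟩ := hΓ
  set Γ := max Γ₀ 0 with hΓdef
  have hΓ1 : Γ < 1 := max_lt hΓ₀1 one_pos
  have hΓ0 : (0:ℝ) ≤ Γ := le_max_right _ _
  have hV₀' : ∀ q ∈ V₀, ∑ k ∈ Finset.range q.1, γ k q.1 q.2 ≤ Γ :=
    fun q hq => (hV₀ q hq).le.trans (le_max_left _ _)
  rcases F.eq_or_neBot with hbot | hne
  · subst hbot; exact tendsto_bot
  have hbddle : IsBoundedUnder (· ≤ ·) F (fun q : ℕ × Set.Ioo (0:ℝ) 1 => a q.1 q.2) :=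
    isBoundedUnder_of ⟨M, fun q => hM q.1 q.2⟩
  have hbddge : IsBoundedUnder (· ≥ ·) F (fun q : ℕ × Set.Ioo (0:ℝ) 1 => a q.1 q.2) :=
    isBoundedUnder_of ⟨0, fun q => ha_nonneg q.1 q.2⟩
  set L := limsup (fun q : ℕ × Set.Ioo (0:ℝ) 1 => a q.1 q.2) F with hLdef
  have hliminf0 : (0:ℝ) ≤ liminf (fun q : ℕ × Set.Ioo (0:ℝ) 1 => a q.1 q.2) F :=
    le_liminf_of_le hbddle.isCoboundedUnder_ge
      (Eventually.of_forall fun q => ha_nonneg q.1 q.2)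
  have hL0 : (0:ℝ) ≤ L :=
    hliminf0.trans (liminf_le_limsup hbddle hbddge)
  have hKey : ∀ ε : ℝ, 0 < ε → L ≤ ε + (L + ε) * Γ + M * ε := by
    intro ε hε
    have hVa : ∀ᶠ q in F, a q.1 q.2 < L + ε :=
      eventually_lt_of_limsup_lt (by linarith) hbddle
    set V : Set (ℕ × Set.Ioo (0:ℝ) 1) := {q | a q.1 q.2 < L + ε} with hVdef
    have hVF : V ∈ F := hVa
    have htail : ∀ᶠ q in F,
        ∑ k ∈ (Finset.range q.1).filter (fun k => (k, q.2) ∉ V), γ k q.1 q.2 < ε :=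
      (hγ V hVF).eventually_lt_const hε
    have hbe : ∀ᶠ q in F, b q.1 q.2 < ε := hb.eventually_lt_const hε
    have hEv : ∀ᶠ q in F, a q.1 q.2 ≤ ε + (L + ε) * Γ + M * ε := by
      filter_upwards [eventually_mem_set.mpr hV₀F, htail, hbe] with q hq₀ hqt hqb
      obtain ⟨n, p⟩ := q
      have hsplit : ∑ k ∈ Finset.range n, γ k n p * a k p =
          (∑ k ∈ (Finset.range n).filter (fun k => (k, p) ∈ V), γ k n p * a k p) +
          ∑ k ∈ (Finset.range n).filter (fun k => (k, p) ∉ V), γ k n p * a k p :=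
        (Finset.sum_filter_add_sum_filter_not _ _ _).symm
      have h1 : ∑ k ∈ (Finset.range n).filter (fun k => (k, p) ∈ V), γ k n p * a k p
          ≤ (L + ε) * Γ := by
        have hle : ∑ k ∈ (Finset.range n).filter (fun k => (k, p) ∈ V), γ k n p * a k p
            ≤ ∑ k ∈ (Finset.range n).filter (fun k => (k, p) ∈ V), γ k n p * (L + ε) := by
          apply Finset.sum_le_sum
          intro k hk
          have hkV : (k, p) ∈ V := (Finset.mem_filter.mp hk).2
          exact mul_le_mul_of_nonneg_left (le_of_lt hkV) (hγ_nonneg k n p)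
        have hsum : ∑ k ∈ (Finset.range n).filter (fun k => (k, p) ∈ V), γ k n p ≤ Γ := by
          refine le_trans ?_ (hV₀' (n, p) hq₀)
          exact Finset.sum_le_sum_of_subset_of_nonneg (Finset.filter_subset _ _)
            (fun k hk _ => hγ_nonneg k n p)
        calc ∑ k ∈ (Finset.range n).filter (fun k => (k, p) ∈ V), γ k n p * a k p
            ≤ ∑ k ∈ (Finset.range n).filter (fun k => (k, p) ∈ V), γ k n p * (L + ε) := hle
          _ = (∑ k ∈ (Finset.range n).filter (fun k => (k, p) ∈ V), γ k n p) * (L + ε) := by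
              rw [Finset.sum_mul]
          _ ≤ Γ * (L + ε) := by
              apply mul_le_mul_of_nonneg_right hsum (by linarith)
          _ = (L + ε) * Γ := mul_comm _ _
      have h2 : ∑ k ∈ (Finset.range n).filter (fun k => (k, p) ∉ V), γ k n p * a k p
          ≤ M * ε := by
        have hle : ∑ k ∈ (Finset.range n).filter (fun k => (k, p) ∉ V), γ k n p * a k p
            ≤ ∑ k ∈ (Finset.range n).filter (fun k => (k, p) ∉ V), γ k n p * M :=
          Finset.sum_le_sum fun k _ =>
            mul_le_mul_of_nonneg_left (hM k p) (hγ_nonneg k n p)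
        calc ∑ k ∈ (Finset.range n).filter (fun k => (k, p) ∉ V), γ k n p * a k p
            ≤ ∑ k ∈ (Finset.range n).filter (fun k => (k, p) ∉ V), γ k n p * M := hle
          _ = (∑ k ∈ (Finset.range n).filter (fun k => (k, p) ∉ V), γ k n p) * M := by
              rw [Finset.sum_mul]
          _ ≤ ε * M := mul_le_mul_of_nonneg_right (le_of_lt hqt) hM0
          _ = M * ε := mul_comm _ _
      have := hrec n p
      rw [hsplit] at this
      linarith
    exact limsup_le_of_le hbddge.isCoboundedUnder_le hEv
  have hLle0 : L ≤ 0 := by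
    have hc : (0:ℝ) < 1 + Γ + M := by linarith
    have h1 : (1 - Γ) * L ≤ 0 := by
      refine le_of_forall_pos_le_add fun δ hδ => ?_
      have hε : 0 < δ / (1 + Γ + M) := div_pos hδ hc
      have hkey := hKey (δ / (1 + Γ + M)) hε
      have hmul : (δ / (1 + Γ + M)) * (1 + Γ + M) = δ := div_mul_cancel₀ _ (ne_of_gt hc)
      nlinarith [hkey, hmul]
    nlinarith
  exact tendsto_of_le_liminf_of_limsup_le hliminf0 hLle0 hbddle hbddge
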